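/- (Critical points in a disk of directional multiplicity one.) Let k be an algebraically closed field that is complete with respect to a nontrivial non-Archimedean absolute value, with ring of integers 𝒪 = {x ∈ k : |x| ≤ 1}, residue field k̃, and coefficientwise reduction map π : 𝒪[X] → k̃[X]. Let f, g ∈ 𝒪[X] be coprime in k[X], suppose π(f) and π(g) are nonzero, write π(f) = H·f₁ and π(g) = H·g₁ where H is a greatest common divisor of π(f) and π(g), and assume that f₁ has a simple zero at 0 (rootMultiplicity 0 f₁ = 1) and that g₁.eval 0 ≠ 0. Then the Wronskian W = f'·g − f·g' is nonzero, and the number of roots x of W with |x| < 1, counted with multiplicity, equals 2·(rootMultiplicity 0 H). That is, the total weight of the critical points of φ = f/g in the open unit disk equals twice the surplus multiplicity of that disk. -/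

import Mathlib

set_option maxHeartbeats 1000000
set_option synthInstance.maxHeartbeats 400000


open Polynomial

variable (k : Type*) [NontriviallyNormedField k] [IsUltrametricDist k]

/-- The ring of integers `𝒪 = {x ∈ k : ‖x‖ ≤ 1}` of a non-Archimedean normed field. -/
def ringOfIntegers : Subring k where
  carrier := {x : k | ‖x‖ ≤ 1}
  mul_mem' := fun {a b} ha hb => by
    simp only [Set.mem_setOf_eq] at *
    calc ‖a * b‖ = ‖a‖ * ‖b‖ := norm_mul a b
    _ ≤ 1 := mul_le_one₀ ha (norm_nonneg b) hb
  one_mem' := by simp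
  add_mem' := fun {a b} ha hb => by
    simp only [Set.mem_setOf_eq] at *
    exact le_trans (IsUltrametricDist.norm_add_le_max a b) (max_le ha hb)
  zero_mem' := by simp
  neg_mem' := fun {a} ha => by simpa using ha

/-- The maximal ideal `{x ∈ 𝒪 : ‖x‖ < 1}` of the ring of integers. -/
def maxIdeal : Ideal (ringOfIntegers k) where
  carrier := {x | ‖(x : k)‖ < 1}
  add_mem' := fun {a b} ha hb => by
    simp only [Set.mem_setOf_eq] at *
    exact lt_of_le_of_lt (IsUltrametricDist.norm_add_le_max (a : k) (b : k)) (max_lt ha hb)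
  zero_mem' := by simp
  smul_mem' := fun c x hx => by
    simp only [Set.mem_setOf_eq] at *
    calc ‖((c • x : ringOfIntegers k) : k)‖ = ‖(c : k)‖ * ‖(x : k)‖ := norm_mul _ _
    _ ≤ 1 * ‖(x : k)‖ := by gcongr; exact c.2
    _ < 1 := by simpa using hx

/-- The residue field `k̃ = 𝒪 / {‖x‖ < 1}`. -/
abbrev residueField := (ringOfIntegers k) ⧸ (maxIdeal k)

/-- Coefficientwise reduction map `π : 𝒪[X] → k̃[X]`. -/
noncomputable def redPoly (h : Polynomial (ringOfIntegers k)) : Polynomial (residueField k) :=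
  h.map (Ideal.Quotient.mk (maxIdeal k))

/-- Inclusion `𝒪[X] → k[X]`. -/
noncomputable def toPoly (h : Polynomial (ringOfIntegers k)) : Polynomial k :=
  h.map (ringOfIntegers k).subtype



section Aux

variable {k : Type*} [NontriviallyNormedField k] [IsUltrametricDist k]

lemma mem_maxIdeal_iff {x : ringOfIntegers k} : x ∈ maxIdeal k ↔ ‖(x : k)‖ < 1 := Iff.rfl

instance maxIdeal_isPrime : (maxIdeal k).IsPrime := by
  constructor
  · intro h
    have h1 : (1 : ringOfIntegers k) ∈ maxIdeal k := h ▸ Submodule.mem_top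
    rw [mem_maxIdeal_iff] at h1
    simp at h1
  · intro a b hab
    rw [mem_maxIdeal_iff] at hab
    by_contra hc
    push_neg at hc
    obtain ⟨ha, hb⟩ := hc
    rw [mem_maxIdeal_iff, not_lt] at ha hb
    have hab' : ‖((a * b : ringOfIntegers k) : k)‖ = ‖(a : k)‖ * ‖(b : k)‖ := by
      push_cast; exact norm_mul _ _
    nlinarith

instance residueField_isDomain : IsDomain (residueField k) :=
  Ideal.Quotient.isDomain (maxIdeal k)

instance residueField_nontrivial : Nontrivial (residueField k) :=
  inferInstance

lemma toPoly_injective : Function.Injective (toPoly k) :=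
  Polynomial.map_injective _ Subtype.val_injective

lemma toPoly_coeff (Q : Polynomial (ringOfIntegers k)) (i : ℕ) :
    (toPoly k Q).coeff i = (Q.coeff i : k) := Polynomial.coeff_map _ _

lemma redPoly_coeff (Q : Polynomial (ringOfIntegers k)) (i : ℕ) :
    (redPoly k Q).coeff i = Ideal.Quotient.mk (maxIdeal k) (Q.coeff i) := Polynomial.coeff_map _ _

lemma norm_multiset_prod' (m : Multiset k) : ‖m.prod‖ = (m.map fun x => ‖x‖).prod := by
  induction m using Multiset.induction_on with
  | empty => simp
  | cons a s ih => simp [norm_mul, ih]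

/-- If `Q ∈ 𝒪[X]` has nonzero reduction and no roots of norm `< 1`,
then its constant coefficient is a unit. -/
lemma coeff_zero_norm_eq_one [IsAlgClosed k] {Q : Polynomial (ringOfIntegers k)}
    (hQ : redPoly k Q ≠ 0) (hroots : ∀ r ∈ (toPoly k Q).roots, (1 : ℝ) ≤ ‖r‖) :
    ‖((Q.coeff 0 : ringOfIntegers k) : k)‖ = 1 := by
  set P : Polynomial k := toPoly k Q with hP
  have hQ0 : Q ≠ 0 := fun h => hQ (by simp [h, redPoly])
  have hP0 : P ≠ 0 := fun h => hQ0 (toPoly_injective (h.trans (Polynomial.map_zero _).symm))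
  have hsplit : P.Splits := IsAlgClosed.splits P
  have hcard : Multiset.card P.roots = P.natDegree := (Polynomial.splits_iff_card_roots).1 hsplit
  set N : ℝ := (P.roots.map fun x => ‖x‖).prod with hN
  have hN0 : 0 ≤ N := Multiset.prod_nonneg (by
    intro a ha
    obtain ⟨r, _, rfl⟩ := Multiset.mem_map.1 ha
    exact norm_nonneg r)
  -- each elementary symmetric function is bounded by N
  have hes : ∀ m : ℕ, ‖P.roots.esymm m‖ ≤ N := by
    intro m
    rcases eq_or_ne (P.roots.powersetCard m) 0 with h0 | hne
    · simp [Multiset.esymm, h0, hN0]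
    · obtain ⟨t, ht, hle⟩ :=
        IsUltrametricDist.exists_norm_multiset_sum_le (P.roots.powersetCard m)
          (f := Multiset.prod)
      refine le_trans hle ?_
      have hts : t ≤ P.roots := (Multiset.mem_powersetCard.1 (ht hne)).1
      obtain ⟨u, hu⟩ := Multiset.le_iff_exists_add.1 hts
      rw [norm_multiset_prod']
      have h1u : (1 : ℝ) ≤ (u.map fun x => ‖x‖).prod := by
        refine Multiset.one_le_prod ?_
        intro a ha
        obtain ⟨r, hr, rfl⟩ := Multiset.mem_map.1 ha
        exact hroots r (by rw [hu]; exact Multiset.mem_add.2 (Or.inr hr))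
      have htn : 0 ≤ (t.map fun x => ‖x‖).prod := Multiset.prod_nonneg (by
        intro a ha
        obtain ⟨r, _, rfl⟩ := Multiset.mem_map.1 ha
        exact norm_nonneg r)
      calc (t.map fun x => ‖x‖).prod
          ≤ (t.map fun x => ‖x‖).prod * (u.map fun x => ‖x‖).prod :=
            le_mul_of_one_le_right htn h1u
        _ = N := by rw [hN, hu, Multiset.map_add, Multiset.prod_add]
  -- the constant coefficient has norm exactly ‖lead‖ * N
  have h0 : ‖P.coeff 0‖ = ‖P.leadingCoeff‖ * N := by
    have heq := hsplit.eq_prod_roots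
    rw [Polynomial.coeff_zero_eq_eval_zero]
    conv_lhs => rw [heq]
    rw [Polynomial.eval_mul, Polynomial.eval_C, norm_mul]
    congr 1
    rw [Polynomial.eval_multiset_prod, Multiset.map_map, norm_multiset_prod', Multiset.map_map]
    congr 1
    ext r
    simp
  -- all coefficients are bounded by ‖lead‖ * N
  have hbound : ∀ j : ℕ, ‖P.coeff j‖ ≤ ‖P.leadingCoeff‖ * N := by
    intro j
    rcases le_or_gt j P.natDegree with hj | hj
    · rw [Polynomial.coeff_eq_esymm_roots_of_splits hsplit hj]
      rw [norm_mul, norm_mul, norm_pow, norm_neg, norm_one, one_pow, mul_one]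
      exact mul_le_mul_of_nonneg_left (hes _) (norm_nonneg _)
    · rw [Polynomial.coeff_eq_zero_of_natDegree_lt hj, norm_zero]
      exact mul_nonneg (norm_nonneg _) hN0
  -- some coefficient is a unit
  obtain ⟨j, hj⟩ : ∃ j, ‖P.coeff j‖ = 1 := by
    by_contra hcon
    push_neg at hcon
    apply hQ
    ext i
    rw [redPoly_coeff, Polynomial.coeff_zero, Ideal.Quotient.eq_zero_iff_mem, mem_maxIdeal_iff]
    have := hcon i
    rw [hP, toPoly_coeff] at this
    exact lt_of_le_of_ne (Q.coeff i).2 this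
  have hle0 : ‖P.coeff 0‖ ≤ 1 := by rw [hP, toPoly_coeff]; exact (Q.coeff 0).2
  have hge0 : (1 : ℝ) ≤ ‖P.coeff 0‖ := by
    calc (1 : ℝ) = ‖P.coeff j‖ := hj.symm
      _ ≤ ‖P.leadingCoeff‖ * N := hbound j
      _ = ‖P.coeff 0‖ := h0.symm
  have : ‖P.coeff 0‖ = 1 := le_antisymm hle0 hge0
  rwa [hP, toPoly_coeff] at this

lemma rootMultiplicity_zero_of_no_small_roots [IsAlgClosed k] {Q : Polynomial (ringOfIntegers k)}
    (hQ : redPoly k Q ≠ 0) (hroots : ∀ r ∈ (toPoly k Q).roots, (1 : ℝ) ≤ ‖r‖) :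
    Polynomial.rootMultiplicity 0 (redPoly k Q) = 0 := by
  apply Polynomial.rootMultiplicity_eq_zero
  intro hroot
  have h1 := coeff_zero_norm_eq_one hQ hroots
  have h2 : (redPoly k Q).coeff 0 = 0 := by
    rw [Polynomial.coeff_zero_eq_eval_zero]; exact hroot
  rw [redPoly_coeff, Ideal.Quotient.eq_zero_iff_mem, mem_maxIdeal_iff] at h2
  rw [h1] at h2
  exact lt_irrefl _ h2

/-- Key counting lemma: the number of roots of `Q` of norm `< 1`, with multiplicity,
equals the multiplicity of `0` as a root of the reduction of `Q`. -/
lemma card_small_roots_eq_rootMultiplicity [IsAlgClosed k] :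
    ∀ (n : ℕ) (Q : Polynomial (ringOfIntegers k)), Q.natDegree ≤ n → redPoly k Q ≠ 0 →
    Multiset.card (((toPoly k Q).roots).filter (fun x => ‖x‖ < 1)) =
      Polynomial.rootMultiplicity 0 (redPoly k Q) := by
  intro n
  induction n with
  | zero =>
    intro Q hdeg hQ
    have hdegP : (toPoly k Q).natDegree = 0 := by
      rw [toPoly, Polynomial.natDegree_map_eq_of_injective Subtype.val_injective]
      omega
    have hroots : (toPoly k Q).roots = 0 := by
      have := Polynomial.card_roots' (toPoly k Q)
      rw [hdegP] at this
      exact Multiset.card_eq_zero.1 (le_antisymm this (Nat.zero_le _))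
    rw [hroots]
    simp only [Multiset.filter_zero, Multiset.card_zero]
    exact (rootMultiplicity_zero_of_no_small_roots hQ (by rw [hroots]; intro r hr; simp at hr)).symm
  | succ m ih =>
    intro Q hdeg hQ
    have hQ0 : Q ≠ 0 := fun h => hQ (by simp [h, redPoly])
    have htQ0 : toPoly k Q ≠ 0 := fun h => hQ0 (toPoly_injective (by simpa [toPoly] using h))
    by_cases hsmall : ∃ r ∈ (toPoly k Q).roots, ‖r‖ < 1
    · obtain ⟨r, hrmem, hr⟩ := hsmall
      set r₀ : ringOfIntegers k := ⟨r, hr.le⟩ with hr₀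
      have hroot : Q.IsRoot r₀ := by
        have hev : (toPoly k Q).eval r = 0 := Polynomial.isRoot_of_mem_roots hrmem
        have hcoe : ((Q.eval r₀ : ringOfIntegers k) : k) = (toPoly k Q).eval r := by
          simp only [toPoly, Polynomial.eval_map]
          exact (Polynomial.eval₂_at_apply (R := ringOfIntegers k)
            (ringOfIntegers k).subtype r₀).symm
        exact Subtype.val_injective (by rw [hcoe, hev]; rfl)
      obtain ⟨S, hS⟩ := (Polynomial.dvd_iff_isRoot).2 hroot
      have htS : toPoly k Q = (Polynomial.X - Polynomial.C r) * toPoly k S := by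
        simp only [hS, toPoly, Polynomial.map_mul, Polynomial.map_sub, Polynomial.map_X,
          Polynomial.map_C]
        rfl
      have hmk : Ideal.Quotient.mk (maxIdeal k) r₀ = 0 :=
        (Ideal.Quotient.eq_zero_iff_mem).2 (mem_maxIdeal_iff.2 hr)
      have hred : redPoly k Q = Polynomial.X * redPoly k S := by
        simp only [hS, redPoly, Polynomial.map_mul, Polynomial.map_sub, Polynomial.map_X,
          Polynomial.map_C, hmk, Polynomial.C_0, sub_zero]
      have hredS : redPoly k S ≠ 0 := fun h => hQ (by rw [hred, h, mul_zero])
      have htS0 : toPoly k S ≠ 0 := by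
        intro h
        rw [htS, h, mul_zero] at htQ0
        exact htQ0 rfl
      have hXr0 : (Polynomial.X - Polynomial.C r : Polynomial k) ≠ 0 :=
        Polynomial.X_sub_C_ne_zero r
      have hdegS : S.natDegree ≤ m := by
        have h1 : (toPoly k Q).natDegree = Q.natDegree :=
          Polynomial.natDegree_map_eq_of_injective Subtype.val_injective Q
        have h2 : (toPoly k S).natDegree = S.natDegree :=
          Polynomial.natDegree_map_eq_of_injective Subtype.val_injective S
        have h3 : (toPoly k Q).natDegree = 1 + (toPoly k S).natDegree := by
          rw [htS, Polynomial.natDegree_mul hXr0 htS0, Polynomial.natDegree_X_sub_C]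
        omega
      have hrootsQ : (toPoly k Q).roots = r ::ₘ (toPoly k S).roots := by
        rw [htS, Polynomial.roots_mul (htS ▸ htQ0), Polynomial.roots_X_sub_C,
          Multiset.singleton_add]
      have hcard : Multiset.card (((toPoly k Q).roots).filter (fun x => ‖x‖ < 1)) =
          1 + Multiset.card (((toPoly k S).roots).filter (fun x => ‖x‖ < 1)) := by
        rw [hrootsQ, Multiset.filter_cons_of_pos (p := fun x => ‖x‖ < 1) _ hr,
          Multiset.card_cons]
        omega
      have hrm : Polynomial.rootMultiplicity 0 (redPoly k Q) =
          1 + Polynomial.rootMultiplicity 0 (redPoly k S) := by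
        rw [hred, Polynomial.rootMultiplicity_mul (hred ▸ hQ)]
        congr 1
        have hx : (Polynomial.X : Polynomial (residueField k)) = Polynomial.X - Polynomial.C 0 := by
          rw [Polynomial.C_0, sub_zero]
        rw [hx, Polynomial.rootMultiplicity_X_sub_C_self]
      rw [hcard, hrm, ih S hdegS hredS]
    · push_neg at hsmall
      have hfilter : ((toPoly k Q).roots).filter (fun x => ‖x‖ < 1) = 0 :=
        Multiset.filter_eq_nil.2 (fun a ha => not_lt.2 (hsmall a ha))
      rw [hfilter]
      simp only [Multiset.card_zero]
      exact (rootMultiplicity_zero_of_no_small_roots hQ hsmall).symm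

end Aux

/-- Critical points in a disk of directional multiplicity one.  Let `f, g ∈ 𝒪[X]` be coprime
in `k[X]` with nonzero reductions, write `π f = H·f₁` and `π g = H·g₁` with `H` a gcd of
`π f, π g`, and suppose `f₁` has a simple zero at `0` and `g₁(0) ≠ 0` (so `φ = f/g` fixes the
Gauss point and the direction toward `0` with directional multiplicity one).  Then the
Wronskian `W = f'·g − f·g'` is nonzero and the number of its roots `x` with `|x| < 1`, counted
with multiplicity, equals `2·(rootMultiplicity 0 H)`: the total weight of the critical points
in the open unit disk is twice the surplus multiplicity of that disk. -/
theorem critical_points_eq_twice_surplus [IsAlgClosed k] [CompleteSpace k]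
    (f g : Polynomial (ringOfIntegers k))
    (hco : IsCoprime (toPoly k f) (toPoly k g))
    (hf0 : redPoly k f ≠ 0) (hg0 : redPoly k g ≠ 0)
    (H f₁ g₁ : Polynomial (residueField k))
    (hHf : redPoly k f = H * f₁) (hHg : redPoly k g = H * g₁)
    (hgcd : ∀ D : Polynomial (residueField k), D ∣ redPoly k f → D ∣ redPoly k g → D ∣ H)
    (hf₁ : rootMultiplicity 0 f₁ = 1) (hg₁ : g₁.eval 0 ≠ 0) :
    derivative (toPoly k f) * toPoly k g - toPoly k f * derivative (toPoly k g) ≠ 0 ∧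
    Multiset.card
      ((derivative (toPoly k f) * toPoly k g -
          toPoly k f * derivative (toPoly k g)).roots.filter (fun x => ‖x‖ < 1)) =
      2 * rootMultiplicity 0 H := by

  classical
  set W : Polynomial (ringOfIntegers k) := derivative f * g - f * derivative g with hW
  have hmapW : toPoly k W =
      derivative (toPoly k f) * toPoly k g - toPoly k f * derivative (toPoly k g) := by
    simp only [hW, toPoly, Polynomial.map_sub, Polynomial.map_mul, Polynomial.derivative_map]
  have hredW' : redPoly k W =
      derivative (redPoly k f) * redPoly k g - redPoly k f * derivative (redPoly k g) := by
    simp only [hW, redPoly, Polynomial.map_sub, Polynomial.map_mul, Polynomial.derivative_map]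
  have hredW : redPoly k W = H * H * (derivative f₁ * g₁ - f₁ * derivative g₁) := by
    rw [hredW', hHf, hHg, derivative_mul, derivative_mul]
    ring
  have hH0 : H ≠ 0 := fun h => hf0 (by rw [hHf, h, zero_mul])
  have hf₁0 : f₁ ≠ 0 := by
    intro h
    rw [h, Polynomial.rootMultiplicity_zero] at hf₁
    exact absurd hf₁ (by norm_num)
  set u : Polynomial (residueField k) :=
    f₁ /ₘ (X - C 0) ^ (rootMultiplicity 0 f₁) with hu
  have hfu : X * u = f₁ := by
    have h := Polynomial.pow_mul_divByMonic_rootMultiplicity_eq f₁ 0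
    nth_rewrite 1 [hf₁] at h
    rw [pow_one, Polynomial.C_0, sub_zero] at h
    rw [hu, Polynomial.C_0, sub_zero]
    exact h
  have hu0 : u.eval 0 ≠ 0 := Polynomial.eval_divByMonic_pow_rootMultiplicity_ne_zero 0 hf₁0
  have hexpr : (derivative f₁ * g₁ - f₁ * derivative g₁).eval 0 ≠ 0 := by
    rw [← hfu]
    simp only [derivative_mul, derivative_X, one_mul, Polynomial.eval_sub, Polynomial.eval_mul,
      Polynomial.eval_add, Polynomial.eval_X, zero_mul, add_zero, mul_zero, sub_zero]
    exact mul_ne_zero hu0 hg₁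
  have hE0 : derivative f₁ * g₁ - f₁ * derivative g₁ ≠ 0 := by
    intro h
    rw [h] at hexpr
    simp at hexpr
  have hredW0 : redPoly k W ≠ 0 := by
    rw [hredW]
    exact mul_ne_zero (mul_ne_zero hH0 hH0) hE0
  have htW0 : toPoly k W ≠ 0 := by
    intro h
    have : W = 0 := toPoly_injective (by simpa [toPoly] using h)
    rw [this] at hredW0
    exact hredW0 (by simp [redPoly])
  constructor
  · rw [← hmapW]; exact htW0
  · have hrm : rootMultiplicity 0 (redPoly k W) = 2 * rootMultiplicity 0 H := by
      rw [hredW, Polynomial.rootMultiplicity_mul (hredW ▸ hredW0),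
        Polynomial.rootMultiplicity_mul (mul_ne_zero hH0 hH0),
        Polynomial.rootMultiplicity_eq_zero (fun h => hexpr h)]
      ring
    rw [← hmapW, card_small_roots_eq_rootMultiplicity W.natDegree W le_rfl hredW0, hrm]
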